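/- Let Ω be a nonempty compact convex subset of ℝ^n (n ≥ 2), let v be a unit vector and c ∈ ℝ, and suppose Ω is symmetric in the hyperplane H = {x : x·v = c}, i.e. R_{v,c}(Ω) = Ω. Then Uf(Ω) ⊆ H. -/

import Mathlib

open scoped RealInnerProductSpace

/-- Reflection in the hyperplane `{x : x·v = b}` (for a unit vector `v`). -/
noncomputable def reflHyp {n : ℕ} (v : EuclideanSpace ℝ (Fin n)) (b : ℝ)
    (x : EuclideanSpace ℝ (Fin n)) : EuclideanSpace ℝ (Fin n) :=
  x - (2 * (⟪x, v⟫ - b)) • v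

/-- The open cap of `X` above the hyperplane `{x : x·v = b}`. -/
def cap {n : ℕ} (X : Set (EuclideanSpace ℝ (Fin n))) (v : EuclideanSpace ℝ (Fin n)) (b : ℝ) :
    Set (EuclideanSpace ℝ (Fin n)) :=
  X ∩ {x | b < ⟪x, v⟫}

/-- The level of the maximal cap of `X` in direction `v`. -/
noncomputable def level {n : ℕ} (X : Set (EuclideanSpace ℝ (Fin n)))
    (v : EuclideanSpace ℝ (Fin n)) : ℝ :=
  sInf {a : ℝ | ∀ b : ℝ, a ≤ b → reflHyp v b '' cap X v b ⊆ X}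

/-- The minimal unfolded region (heart) of `X`. -/
noncomputable def Uf {n : ℕ} (X : Set (EuclideanSpace ℝ (Fin n))) :
    Set (EuclideanSpace ℝ (Fin n)) :=
  ⋂ v ∈ {v : EuclideanSpace ℝ (Fin n) | ‖v‖ = 1}, {x | ⟪x, v⟫ ≤ level X v}

/-- The δ-parallel body of `Ω`: the union of closed δ-balls centered in `Ω`. -/
def parallelBody {n : ℕ} (Ω : Set (EuclideanSpace ℝ (Fin n))) (δ : ℝ) :
    Set (EuclideanSpace ℝ (Fin n)) :=
  ⋃ x ∈ Ω, Metric.closedBall x δ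

lemma inner_reflHyp {n : ℕ} (v : EuclideanSpace ℝ (Fin n)) (hv : ‖v‖ = 1) (b : ℝ)
    (x : EuclideanSpace ℝ (Fin n)) : ⟪reflHyp v b x, v⟫ = 2 * b - ⟪x, v⟫ := by
  have hvv : ⟪v, v⟫ = (1 : ℝ) := by
    rw [real_inner_self_eq_norm_sq, hv]; norm_num
  rw [reflHyp, inner_sub_left, real_inner_smul_left, hvv]
  ring

lemma level_le_of_symm {n : ℕ} (Ω : Set (EuclideanSpace ℝ (Fin n)))
    (hΩne : Ω.Nonempty) (hΩ : IsCompact Ω) (hconv : Convex ℝ Ω)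
    (v : EuclideanSpace ℝ (Fin n)) (hv : ‖v‖ = 1) (c : ℝ)
    (hsym : reflHyp v c '' Ω = Ω) : level Ω v ≤ c := by
  -- the set whose infimum is the level
  set S : Set ℝ := {a : ℝ | ∀ b : ℝ, a ≤ b → reflHyp v b '' cap Ω v b ⊆ Ω} with hS
  -- minimum of ⟪·,v⟫ on Ω
  obtain ⟨x0, hx0Ω, hx0min⟩ :=
    hΩ.exists_isMinOn hΩne
      ((continuous_id.inner continuous_const :
        Continuous fun x : EuclideanSpace ℝ (Fin n) => ⟪x, v⟫).continuousOn)
  have hbdd : BddBelow S := by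
    refine ⟨⟪x0, v⟫, fun a ha => ?_⟩
    by_contra hlt
    push_neg at hlt
    have hx0cap : x0 ∈ cap Ω v a := ⟨hx0Ω, hlt⟩
    have himg : reflHyp v a x0 ∈ Ω := ha a le_rfl ⟨x0, hx0cap, rfl⟩
    have h2 := hx0min himg
    simp only [Set.mem_setOf_eq, id] at h2
    rw [inner_reflHyp v hv a x0] at h2
    linarith
  have hcS : c ∈ S := by
    intro b hb y hy
    obtain ⟨x, ⟨hxΩ, hxb⟩, rfl⟩ := hy
    set t : ℝ := ⟪x, v⟫ with ht
    have hz : reflHyp v c x ∈ Ω := hsym ▸ ⟨x, hxΩ, rfl⟩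
    have htc : (0 : ℝ) < t - c := by simp only [Set.mem_setOf_eq] at hxb; linarith
    have htb : (0 : ℝ) < t - b := by simp only [Set.mem_setOf_eq] at hxb; linarith
    set lam : ℝ := (t - b) / (t - c) with hlam
    have hlam0 : 0 ≤ lam := div_nonneg htb.le htc.le
    have hlam1 : lam ≤ 1 := by
      rw [hlam, div_le_one htc]; linarith
    have hcoef : lam * (2 * (⟪x, v⟫ - c)) = 2 * (⟪x, v⟫ - b) := by
      rw [hlam, ← ht]
      field_simp
    have key : reflHyp v b x = (1 - lam) • x + lam • reflHyp v c x := by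
      simp only [reflHyp, smul_sub, sub_smul, one_smul, smul_smul, hcoef]
      abel
    rw [key]
    exact hconv hxΩ hz (by linarith) hlam0 (by ring)
  exact csInf_le hbdd hcS

theorem stmt13 {n : ℕ} (hn : 2 ≤ n) (Ω : Set (EuclideanSpace ℝ (Fin n)))
    (hΩne : Ω.Nonempty) (hΩ : IsCompact Ω) (hconv : Convex ℝ Ω)
    (v : EuclideanSpace ℝ (Fin n)) (hv : ‖v‖ = 1) (c : ℝ)
    (hsym : reflHyp v c '' Ω = Ω) :
    Uf Ω ⊆ {x | ⟪x, v⟫ = c} := by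
  intro x hx
  simp only [Uf, Set.mem_iInter, Set.mem_setOf_eq] at hx
  have hsym' : reflHyp (-v) (-c) '' Ω = Ω := by
    have : reflHyp (-v) (-c) = reflHyp v c := by
      funext y
      simp only [reflHyp, inner_neg_right]
      module
    rw [this, hsym]
  have h1 : ⟪x, v⟫ ≤ c :=
    le_trans (hx v hv) (level_le_of_symm Ω hΩne hΩ hconv v hv c hsym)
  have h2 : ⟪x, -v⟫ ≤ -c :=
    le_trans (hx (-v) (by simp [hv]))
      (level_le_of_symm Ω hΩne hΩ hconv (-v) (by simp [hv]) (-c) hsym')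
  rw [inner_neg_right] at h2
  simp only [Set.mem_setOf_eq]
  linarith
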